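/- Uniqueness of the traceless-jump-operator decomposition: suppose an HPTA superoperator L on a finite-dimensional Hilbert space admits two decompositions L(ρ) = -i[H₁, ρ] + D₁(ρ) = -i[H₂, ρ] + D₂(ρ), where each D_i is of Lindblad form D_i(ρ) = Σ_j c_{ij}(F_{ij} ρ F_{ij}† - ½{F_{ij}† F_{ij}, ρ}) with real coefficients c_{ij} and traceless operators F_{ij}, and H₁, H₂ are Hermitian. Then D₁ = D₂ as superoperators, and H₁ - H₂ is a real multiple of the identity. -/

import Mathlib

open Matrix


private def EE {d : ℕ} (a b : Fin d) : Matrix (Fin d) (Fin d) ℂ := Matrix.single a b 1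

private lemma mulE_apply {d : ℕ} (M : Matrix (Fin d) (Fin d) ℂ) (i j a b : Fin d) :
    (M * EE i j) a b = if b = j then M a i else 0 := by
  rcases eq_or_ne b j with h | h
  · subst h; simp [EE]
  · simp [EE, h]

private lemma Emul_apply {d : ℕ} (M : Matrix (Fin d) (Fin d) ℂ) (i j a b : Fin d) :
    (EE i j * M) a b = if a = i then M j b else 0 := by
  rcases eq_or_ne a i with h | h
  · subst h; simp [EE]
  · simp [EE, h]

private lemma triple_apply {d : ℕ} (F G : Matrix (Fin d) (Fin d) ℂ) (i j a b : Fin d) :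
    (F * EE i j * G) a b = F a i * G j b := by
  rw [mul_assoc, mul_apply]
  simp [Emul_apply, mul_ite]

private lemma diss_sum {d : ℕ} (F : Matrix (Fin d) (Fin d) ℂ) (hF : F.trace = 0) (m p : Fin d) :
    ∑ q, (F * EE p q * Fᴴ
        - (1/2 : ℂ) • (Fᴴ * F * EE p q + EE p q * (Fᴴ * F))) m q
  = ∑ q, (F * EE q m * Fᴴ
        - (1/2 : ℂ) • (Fᴴ * F * EE q m + EE q m * (Fᴴ * F))) q p := by
  have hstar : ∑ q : Fin d, (Fᴴ) q q = 0 := by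
    have h : (Fᴴ).trace = 0 := by rw [trace_conjTranspose, hF, star_zero]
    simpa [Matrix.trace, Matrix.diag] using h
  have htr : ∑ q : Fin d, F q q = 0 := by simpa [Matrix.trace, Matrix.diag] using hF
  simp only [Matrix.sub_apply, Matrix.smul_apply, Matrix.add_apply, triple_apply, mulE_apply, Emul_apply,
    smul_eq_mul, if_pos rfl, eq_self_iff_true, if_true]
  rw [Finset.sum_sub_distrib, Finset.sum_sub_distrib, ← Finset.mul_sum, ← Finset.sum_mul,
    hstar, htr]
  by_cases hmp : m = p
  · subst hmp
    simp only [if_true, mul_zero, zero_mul]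
    congr 1
    exact Finset.sum_congr rfl fun x _ => by ring
  · have hpm : ¬ p = m := fun h => hmp h.symm
    simp [hmp, hpm]

private lemma ham_sum1 {d : ℕ} (H : Matrix (Fin d) (Fin d) ℂ) (m p : Fin d) :
    ∑ q, ((-Complex.I) • (H * EE p q - EE p q * H)) m q
  = (-Complex.I) * ((d:ℂ) * H m p - if m = p then H.trace else 0) := by
  simp only [Matrix.smul_apply, Matrix.sub_apply, mulE_apply, Emul_apply, if_pos rfl, smul_eq_mul]
  rw [← Finset.mul_sum, Finset.sum_sub_distrib]
  by_cases hmp : m = p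
  · subst hmp; simp [Matrix.trace, Matrix.diag, mul_comm]
  · simp [hmp, mul_comm]

private lemma ham_sum2 {d : ℕ} (H : Matrix (Fin d) (Fin d) ℂ) (m p : Fin d) :
    ∑ q, ((-Complex.I) • (H * EE q m - EE q m * H)) q p
  = (-Complex.I) * ((if p = m then H.trace else 0) - (d:ℂ) * H m p) := by
  simp only [Matrix.smul_apply, Matrix.sub_apply, mulE_apply, Emul_apply, if_pos rfl, smul_eq_mul]
  rw [← Finset.mul_sum, Finset.sum_sub_distrib]
  by_cases hpm : p = m
  · subst hpm; simp [Matrix.trace, Matrix.diag, mul_comm]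
  · simp [hpm, mul_comm]
private lemma diss_expand1 {d n : ℕ} (c : Fin n → ℝ) (F : Fin n → Matrix (Fin d) (Fin d) ℂ)
    (m p : Fin d) :
    ∑ q, (∑ j, (c j : ℂ) • (F j * EE p q * (F j)ᴴ
        - (1/2:ℂ) • ((F j)ᴴ * F j * EE p q + EE p q * ((F j)ᴴ * F j)))) m q
  = ∑ j, (c j : ℂ) * ∑ q, (F j * EE p q * (F j)ᴴ
        - (1/2:ℂ) • ((F j)ᴴ * F j * EE p q + EE p q * ((F j)ᴴ * F j))) m q := by
  simp only [Matrix.sum_apply, Matrix.smul_apply, smul_eq_mul, Finset.mul_sum]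
  exact Finset.sum_comm

private lemma diss_expand2 {d n : ℕ} (c : Fin n → ℝ) (F : Fin n → Matrix (Fin d) (Fin d) ℂ)
    (m p : Fin d) :
    ∑ q, (∑ j, (c j : ℂ) • (F j * EE q m * (F j)ᴴ
        - (1/2:ℂ) • ((F j)ᴴ * F j * EE q m + EE q m * ((F j)ᴴ * F j)))) q p
  = ∑ j, (c j : ℂ) * ∑ q, (F j * EE q m * (F j)ᴴ
        - (1/2:ℂ) • ((F j)ᴴ * F j * EE q m + EE q m * ((F j)ᴴ * F j))) q p := by
  simp only [Matrix.sum_apply, Matrix.smul_apply, smul_eq_mul, Finset.mul_sum]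
  exact Finset.sum_comm

/-- Uniqueness of the traceless-jump-operator decomposition: if an HPTA superoperator
admits two decompositions `L(ρ) = -i[H₁,ρ] + D₁(ρ) = -i[H₂,ρ] + D₂(ρ)` with `H₁, H₂`
Hermitian and `D₁, D₂` in Lindblad form with real coefficients and traceless jump
operators, then `D₁ = D₂` and `H₁ − H₂` is a real multiple of the identity. -/
theorem traceless_jump_decomposition_unique {d : ℕ}
    (H₁ H₂ : Matrix (Fin d) (Fin d) ℂ)
    (hH₁ : H₁.IsHermitian) (hH₂ : H₂.IsHermitian)
    {n₁ n₂ : ℕ} (c₁ : Fin n₁ → ℝ) (F₁ : Fin n₁ → Matrix (Fin d) (Fin d) ℂ)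
    (c₂ : Fin n₂ → ℝ) (F₂ : Fin n₂ → Matrix (Fin d) (Fin d) ℂ)
    (hF₁ : ∀ j, (F₁ j).trace = 0) (hF₂ : ∀ j, (F₂ j).trace = 0)
    (D₁ D₂ : Matrix (Fin d) (Fin d) ℂ → Matrix (Fin d) (Fin d) ℂ)
    (hD₁ : ∀ ρ, D₁ ρ = ∑ j, (c₁ j : ℂ) • (F₁ j * ρ * (F₁ j)ᴴ
        - (1 / 2 : ℂ) • ((F₁ j)ᴴ * F₁ j * ρ + ρ * ((F₁ j)ᴴ * F₁ j))))
    (hD₂ : ∀ ρ, D₂ ρ = ∑ j, (c₂ j : ℂ) • (F₂ j * ρ * (F₂ j)ᴴ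
        - (1 / 2 : ℂ) • ((F₂ j)ᴴ * F₂ j * ρ + ρ * ((F₂ j)ᴴ * F₂ j))))
    (heq : ∀ ρ : Matrix (Fin d) (Fin d) ℂ,
      (-Complex.I) • (H₁ * ρ - ρ * H₁) + D₁ ρ
        = (-Complex.I) • (H₂ * ρ - ρ * H₂) + D₂ ρ) :
    (∀ ρ, D₁ ρ = D₂ ρ) ∧ ∃ r : ℝ, H₁ - H₂ = (r : ℂ) • (1 : Matrix (Fin d) (Fin d) ℂ) := by
  by_cases hd : d = 0
  · subst hd
    refine ⟨fun ρ => by ext i j; exact i.elim0, ⟨0, by ext i j; exact i.elim0⟩⟩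
  have hdC : (d : ℂ) ≠ 0 := Nat.cast_ne_zero.mpr hd
  -- key entrywise identity
  have key : ∀ m p : Fin d, (d:ℂ) * (H₁ m p - H₂ m p)
      = if m = p then H₁.trace - H₂.trace else 0 := by
    intro m p
    have e1 : ∀ q : Fin d,
        ((-Complex.I) • (H₁ * EE p q - EE p q * H₁)) m q
          + (∑ j, (c₁ j : ℂ) • (F₁ j * EE p q * (F₁ j)ᴴ
            - (1/2:ℂ) • ((F₁ j)ᴴ * F₁ j * EE p q + EE p q * ((F₁ j)ᴴ * F₁ j)))) m q
        = ((-Complex.I) • (H₂ * EE p q - EE p q * H₂)) m q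
          + (∑ j, (c₂ j : ℂ) • (F₂ j * EE p q * (F₂ j)ᴴ
            - (1/2:ℂ) • ((F₂ j)ᴴ * F₂ j * EE p q + EE p q * ((F₂ j)ᴴ * F₂ j)))) m q := by
      intro q
      have h := heq (EE p q)
      rw [hD₁, hD₂] at h
      have := congrFun (congrFun h m) q
      simpa [Matrix.add_apply] using this
    have e2 : ∀ q : Fin d,
        ((-Complex.I) • (H₁ * EE q m - EE q m * H₁)) q p
          + (∑ j, (c₁ j : ℂ) • (F₁ j * EE q m * (F₁ j)ᴴ
            - (1/2:ℂ) • ((F₁ j)ᴴ * F₁ j * EE q m + EE q m * ((F₁ j)ᴴ * F₁ j)))) q p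
        = ((-Complex.I) • (H₂ * EE q m - EE q m * H₂)) q p
          + (∑ j, (c₂ j : ℂ) • (F₂ j * EE q m * (F₂ j)ᴴ
            - (1/2:ℂ) • ((F₂ j)ᴴ * F₂ j * EE q m + EE q m * ((F₂ j)ᴴ * F₂ j)))) q p := by
      intro q
      have h := heq (EE q m)
      rw [hD₁, hD₂] at h
      have := congrFun (congrFun h q) p
      simpa [Matrix.add_apply] using this
    have h1 := Finset.sum_congr rfl (fun q (_ : q ∈ Finset.univ) => e1 q)
    have h2 := Finset.sum_congr rfl (fun q (_ : q ∈ Finset.univ) => e2 q)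
    rw [Finset.sum_add_distrib, Finset.sum_add_distrib, ham_sum1, ham_sum1,
      diss_expand1, diss_expand1] at h1
    rw [Finset.sum_add_distrib, Finset.sum_add_distrib, ham_sum2, ham_sum2,
      diss_expand2, diss_expand2] at h2
    -- rewrite the dissipator sums in h2 to match those in h1
    rw [show (∑ j, (c₁ j : ℂ) * ∑ q, (F₁ j * EE q m * (F₁ j)ᴴ
            - (1/2:ℂ) • ((F₁ j)ᴴ * F₁ j * EE q m + EE q m * ((F₁ j)ᴴ * F₁ j))) q p)
        = ∑ j, (c₁ j : ℂ) * ∑ q, (F₁ j * EE p q * (F₁ j)ᴴ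
            - (1/2:ℂ) • ((F₁ j)ᴴ * F₁ j * EE p q + EE p q * ((F₁ j)ᴴ * F₁ j))) m q from
          Finset.sum_congr rfl fun j _ => by rw [← diss_sum (F₁ j) (hF₁ j) m p],
        show (∑ j, (c₂ j : ℂ) * ∑ q, (F₂ j * EE q m * (F₂ j)ᴴ
            - (1/2:ℂ) • ((F₂ j)ᴴ * F₂ j * EE q m + EE q m * ((F₂ j)ᴴ * F₂ j))) q p)
        = ∑ j, (c₂ j : ℂ) * ∑ q, (F₂ j * EE p q * (F₂ j)ᴴ
            - (1/2:ℂ) • ((F₂ j)ᴴ * F₂ j * EE p q + EE p q * ((F₂ j)ᴴ * F₂ j))) m q from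
          Finset.sum_congr rfl fun j _ => by rw [← diss_sum (F₂ j) (hF₂ j) m p]] at h2
    by_cases hmp : m = p
    · subst hmp
      simp only [if_pos rfl, if_true] at h1 h2 ⊢
      linear_combination (Complex.I / 2) * h1 - (Complex.I / 2) * h2
        + ((d:ℂ) * H₁ m m - (d:ℂ) * H₂ m m + H₂.trace - H₁.trace) * Complex.I_sq
    · have hpm : ¬ p = m := fun h => hmp h.symm
      simp only [if_neg hmp, if_neg hpm] at h1 h2 ⊢
      linear_combination (Complex.I / 2) * h1 - (Complex.I / 2) * h2
        + ((d:ℂ) * H₁ m p - (d:ℂ) * H₂ m p) * Complex.I_sq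
  -- trace of H₁ - H₂ is real
  set t : ℂ := H₁.trace - H₂.trace with ht
  have htreal : (t.re : ℂ) = t := by
    rw [← Complex.conj_eq_iff_re]
    have hherm : (H₁ - H₂)ᴴ = H₁ - H₂ := by
      rw [conjTranspose_sub, hH₁, hH₂]
    have h2 := congrArg Matrix.trace hherm
    rw [trace_conjTranspose, trace_sub] at h2
    simpa [ht] using h2
  have hr : ((t.re / d : ℝ) : ℂ) = t / d := by
    push_cast [htreal]; ring
  have hK : H₁ - H₂ = ((t.re / d : ℝ) : ℂ) • (1 : Matrix (Fin d) (Fin d) ℂ) := by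
    ext m p
    have hk := key m p
    rw [Matrix.smul_apply, Matrix.sub_apply, Matrix.one_apply, smul_eq_mul, hr]
    by_cases hmp : m = p
    · simp only [if_pos hmp] at hk ⊢
      field_simp
      linear_combination hk
    · simp only [if_neg hmp] at hk ⊢
      rw [mul_zero]
      have := (mul_eq_zero.mp hk).resolve_left hdC
      linear_combination this
  refine ⟨?_, ⟨t.re / d, hK⟩⟩
  intro ρ
  have hcomm : H₁ * ρ - ρ * H₁ = H₂ * ρ - ρ * H₂ := by
    have h : H₁ = ((t.re / d : ℝ) : ℂ) • (1 : Matrix (Fin d) (Fin d) ℂ) + H₂ :=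
      sub_eq_iff_eq_add.mp hK
    rw [h]
    simp only [add_mul, mul_add, smul_mul_assoc, mul_smul_comm, one_mul, mul_one]
    abel
  have h := heq ρ
  rw [hcomm] at h
  exact add_left_cancel h
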